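/- arXiv:1707.07492 — 4 statements merged into one kernel-verified Lean document; each statement's English description precedes it below -/
import Mathlib

section
/- (Maximum principle for the Bessel Poisson extension.) Let λ > 0, let μ be a Borel measure on ℝ²₊₊, let g : ℝ²₊₊ → [0,∞] be Borel measurable, let I ⊂ ℝ₊ be a bounded interval, let x ∈ I, and let z ∈ ℝ₊ satisfy |I| ≤ |z − x| ≤ 3|I|. Then P*_μ(g · 1_{ℝ²₊₊ ∖ 3Î})(x) ≤ 19^{λ+1} · P*_μ(g)(z). In particular, if P*_μ(g)(z) ≤ κ then P*_μ(g · 1_{ℝ²₊₊ ∖ 3Î})(x) ≤ 19^{λ+1} κ. -/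
open MeasureTheory Set ENNReal

/-- The Bessel Poisson kernel given by Weinstein's formula. -/
noncomputable def PK (lam t x y : ℝ) : ℝ :=
  (2 * lam * t / Real.pi) *
    ∫ θ in Set.Ioo (0 : ℝ) Real.pi,
      Real.sin θ ^ (2 * lam - 1) *
        (x ^ 2 + y ^ 2 + t ^ 2 - 2 * x * y * Real.cos θ) ^ (-(lam + 1))

/-- The Poisson extension `P_σ f (x, t)` of a nonnegative function on `ℝ₊`. -/
noncomputable def Pfwd (lam : ℝ) (σ : Measure ℝ) (f : ℝ → ℝ≥0∞) (x t : ℝ) : ℝ≥0∞ :=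
  ∫⁻ y in Set.Ioi (0 : ℝ), ENNReal.ofReal (PK lam t x y) * f y ∂σ

/-- The adjoint operator `P*_μ g (y)` of a nonnegative function on `ℝ²₊₊`. -/
noncomputable def Padj (lam : ℝ) (μ : Measure (ℝ × ℝ)) (g : ℝ × ℝ → ℝ≥0∞) (y : ℝ) : ℝ≥0∞ :=
  ∫⁻ p in Set.Ioi (0 : ℝ) ×ˢ Set.Ioi (0 : ℝ), ENNReal.ofReal (PK lam p.2 p.1 y) * g p ∂μ

/-- The triple `3I` of the interval `I = (a, b)`, intersected with `ℝ₊`. -/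
def tri (a b : ℝ) : Set ℝ :=
  Set.Ioo ((a + b) / 2 - 3 * (b - a) / 2) ((a + b) / 2 + 3 * (b - a) / 2) ∩ Set.Ioi 0

/-- The Carleson box `Î = I × [0, |I|]` of the interval `I = (a, b)`. -/
def boxI (a b : ℝ) : Set (ℝ × ℝ) := Set.Ioo a b ×ˢ Set.Icc 0 (b - a)

/-- The enlarged box `3Î = 3I × [0, 3|I|]` of the interval `I = (a, b)`. -/
def boxI3 (a b : ℝ) : Set (ℝ × ℝ) := tri a b ×ˢ Set.Icc 0 (3 * (b - a))

/-- The two-weight norm inequality for the Bessel Poisson operator with constant `N`,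
for nonnegative `f ∈ L²(ℝ₊; σ)`. -/
def NormIneq (lam : ℝ) (σ : Measure ℝ) (μ : Measure (ℝ × ℝ)) (N : ℝ≥0∞) : Prop :=
  ∀ f : ℝ → ℝ≥0∞, Measurable f → (∫⁻ y in Set.Ioi (0 : ℝ), f y ^ 2 ∂σ) < ∞ →
    (∫⁻ p in Set.Ioi (0 : ℝ) ×ˢ Set.Ioi (0 : ℝ), Pfwd lam σ f p.1 p.2 ^ 2 ∂μ)
      ≤ N ^ 2 * ∫⁻ y in Set.Ioi (0 : ℝ), f y ^ 2 ∂σ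

/-- The dual two-weight norm inequality with constant `N`, for nonnegative
`g ∈ L²(ℝ²₊₊; μ)`. -/
def DualNormIneq (lam : ℝ) (σ : Measure ℝ) (μ : Measure (ℝ × ℝ)) (N : ℝ≥0∞) : Prop :=
  ∀ g : ℝ × ℝ → ℝ≥0∞, Measurable g →
    (∫⁻ p in Set.Ioi (0 : ℝ) ×ˢ Set.Ioi (0 : ℝ), g p ^ 2 ∂μ) < ∞ →
    (∫⁻ y in Set.Ioi (0 : ℝ), Padj lam μ g y ^ 2 ∂σ)
      ≤ N ^ 2 * ∫⁻ p in Set.Ioi (0 : ℝ) ×ˢ Set.Ioi (0 : ℝ), g p ^ 2 ∂μ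

/-- The forward testing condition with constant `F`:
`∫_{3Î} (P_σ 1_I)² dμ ≤ F² σ(I)` for every bounded interval `I ⊂ ℝ₊`. -/
def FwdTesting (lam : ℝ) (σ : Measure ℝ) (μ : Measure (ℝ × ℝ)) (F : ℝ≥0∞) : Prop :=
  ∀ a b : ℝ, 0 ≤ a → a < b →
    (∫⁻ p in boxI3 a b, Pfwd lam σ ((Set.Ioo a b).indicator 1) p.1 p.2 ^ 2 ∂μ)
      ≤ F ^ 2 * σ (Set.Ioo a b)

/-- The backward testing condition with constant `B`:
`∫_{3I} (P*_μ (t 1_Î))² dσ ≤ B² ∫_Î t² dμ` for every bounded interval `I ⊂ ℝ₊`. -/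
def BwdTesting (lam : ℝ) (σ : Measure ℝ) (μ : Measure (ℝ × ℝ)) (B : ℝ≥0∞) : Prop :=
  ∀ a b : ℝ, 0 ≤ a → a < b →
    (∫⁻ y in tri a b,
        Padj lam μ ((boxI a b).indicator fun p => ENNReal.ofReal p.2) y ^ 2 ∂σ)
      ≤ B ^ 2 * ∫⁻ p in boxI a b, ENNReal.ofReal p.2 ^ 2 ∂μ


/-- Integrability of `sin θ ^ p` on `(0, π)` for `p > -1`. -/
lemma integrableOn_sin_rpow {p : ℝ} (hp : -1 < p) :
    MeasureTheory.IntegrableOn (fun θ => Real.sin θ ^ p) (Set.Ioo 0 Real.pi) := by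
  have pi_pos := Real.pi_pos
  have hmeas : Measurable fun θ : ℝ => Real.sin θ ^ p := by fun_prop
  rcases le_or_gt 0 p with hp0 | hp0
  · -- `p ≥ 0`: the function is bounded by `1`.
    refine MeasureTheory.Integrable.mono' (g := fun _ => (1:ℝ))
      ((MeasureTheory.integrableOn_const_iff (C := (1:ℝ))).mpr (Or.inr measure_Ioo_lt_top))
      hmeas.aestronglyMeasurable ?_
    filter_upwards [MeasureTheory.ae_restrict_mem measurableSet_Ioo] with θ hθ
    rw [Real.norm_eq_abs, abs_of_nonneg (Real.rpow_nonneg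
      (Real.sin_nonneg_of_nonneg_of_le_pi hθ.1.le hθ.2.le) p)]
    exact Real.rpow_le_one (Real.sin_nonneg_of_nonneg_of_le_pi hθ.1.le hθ.2.le)
      (Real.sin_le_one θ) hp0
  · -- `-1 < p < 0`: dominate by `c⋅θ^p` near `0` and by `c⋅(π-θ)^p` near `π`.
    have hrpow : MeasureTheory.IntegrableOn (fun θ : ℝ => θ ^ p) (Set.Ioo 0 (Real.pi / 2)) := by
      have h1 : IntervalIntegrable (fun θ : ℝ => θ ^ p) MeasureTheory.volume 0 (Real.pi / 2) :=
        intervalIntegral.intervalIntegrable_rpow' hp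
      exact ((intervalIntegrable_iff_integrableOn_Ioc_of_le
        (by positivity : (0:ℝ) ≤ Real.pi / 2)).mp h1).mono_set Set.Ioo_subset_Ioc_self
    have hrpow' : MeasureTheory.IntegrableOn (fun θ : ℝ => (Real.pi - θ) ^ p)
        (Set.Ico (Real.pi / 2) Real.pi) := by
      have h1 : IntervalIntegrable (fun θ : ℝ => θ ^ p) MeasureTheory.volume 0 (Real.pi / 2) :=
        intervalIntegral.intervalIntegrable_rpow' hp
      have h2 := h1.comp_sub_left Real.pi
      rw [sub_zero] at h2
      have h3 : IntervalIntegrable (fun θ : ℝ => (Real.pi - θ) ^ p) MeasureTheory.volume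
          (Real.pi / 2) Real.pi := by
        have h4 : Real.pi - Real.pi / 2 = Real.pi / 2 := by ring
        rw [h4] at h2
        exact h2.symm
      have h5 := (intervalIntegrable_iff_integrableOn_Ioc_of_le
        (by linarith : Real.pi / 2 ≤ Real.pi)).mp h3
      rw [integrableOn_Ico_iff_integrableOn_Ioo]
      exact h5.mono_set Set.Ioo_subset_Ioc_self
    have hsub : Set.Ioo (0:ℝ) Real.pi ⊆
        Set.Ioo 0 (Real.pi / 2) ∪ Set.Ico (Real.pi / 2) Real.pi := by
      intro θ hθ
      rcases lt_or_ge θ (Real.pi / 2) with h | h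
      · exact Or.inl ⟨hθ.1, h⟩
      · exact Or.inr ⟨h, hθ.2⟩
    refine (MeasureTheory.IntegrableOn.union ?_ ?_).mono_set hsub
    · refine MeasureTheory.Integrable.mono' (g := fun θ => (2 / Real.pi) ^ p * θ ^ p)
        (hrpow.const_mul _) hmeas.aestronglyMeasurable ?_
      filter_upwards [MeasureTheory.ae_restrict_mem measurableSet_Ioo] with θ hθ
      have hs0 : 0 ≤ Real.sin θ :=
        Real.sin_nonneg_of_nonneg_of_le_pi hθ.1.le (by linarith [hθ.2])
      rw [Real.norm_eq_abs, abs_of_nonneg (Real.rpow_nonneg hs0 p)]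
      have hsin : 2 / Real.pi * θ ≤ Real.sin θ := Real.mul_le_sin hθ.1.le hθ.2.le
      calc Real.sin θ ^ p ≤ (2 / Real.pi * θ) ^ p :=
            Real.rpow_le_rpow_of_nonpos (mul_pos (by positivity) hθ.1) hsin hp0.le
        _ = (2 / Real.pi) ^ p * θ ^ p := Real.mul_rpow (by positivity) hθ.1.le
    · refine MeasureTheory.Integrable.mono'
        (g := fun θ => (2 / Real.pi) ^ p * (Real.pi - θ) ^ p)
        (hrpow'.const_mul _) hmeas.aestronglyMeasurable ?_
      filter_upwards [MeasureTheory.ae_restrict_mem measurableSet_Ico] with θ hθ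
      have h0 : (0:ℝ) ≤ θ := le_trans (by positivity) hθ.1
      have hs0 : 0 ≤ Real.sin θ := Real.sin_nonneg_of_nonneg_of_le_pi h0 hθ.2.le
      rw [Real.norm_eq_abs, abs_of_nonneg (Real.rpow_nonneg hs0 p)]
      have hsin : 2 / Real.pi * (Real.pi - θ) ≤ Real.sin θ := by
        have h6 := Real.mul_le_sin (x := Real.pi - θ) (by linarith [hθ.2])
          (by linarith [hθ.1])
        rwa [Real.sin_pi_sub] at h6
      have hπθ : 0 < Real.pi - θ := by linarith [hθ.2]
      calc Real.sin θ ^ p ≤ (2 / Real.pi * (Real.pi - θ)) ^ p :=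
            Real.rpow_le_rpow_of_nonpos (mul_pos (by positivity) hπθ) hsin hp0.le
        _ = (2 / Real.pi) ^ p * (Real.pi - θ) ^ p :=
            Real.mul_rpow (by positivity) hπθ.le

/-- Integrability of the full Poisson-kernel integrand on `(0, π)`. -/
lemma integrableOn_PK_integrand {lam t u y : ℝ} (hlam : 0 < lam)
    (hu : 0 ≤ u) (hy : 0 ≤ y) (ht : t ≠ 0) :
    MeasureTheory.IntegrableOn (fun θ => Real.sin θ ^ (2 * lam - 1) *
      (u ^ 2 + y ^ 2 + t ^ 2 - 2 * u * y * Real.cos θ) ^ (-(lam + 1)))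
      (Set.Ioo 0 Real.pi) := by
  have ht2 : (0:ℝ) < t ^ 2 := lt_of_le_of_ne (sq_nonneg t) (Ne.symm (pow_ne_zero 2 ht))
  have hD : ∀ θ : ℝ, t ^ 2 ≤ u ^ 2 + y ^ 2 + t ^ 2 - 2 * u * y * Real.cos θ := by
    intro θ
    nlinarith [Real.cos_le_one θ, mul_nonneg hu hy, sq_nonneg (u - y)]
  have hC : ∀ θ : ℝ,
      (u ^ 2 + y ^ 2 + t ^ 2 - 2 * u * y * Real.cos θ) ^ (-(lam + 1))
        ≤ (t ^ 2) ^ (-(lam + 1)) := fun θ =>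
    Real.rpow_le_rpow_of_nonpos ht2 (hD θ) (by linarith)
  have hmeas : Measurable fun θ : ℝ => Real.sin θ ^ (2 * lam - 1) *
      (u ^ 2 + y ^ 2 + t ^ 2 - 2 * u * y * Real.cos θ) ^ (-(lam + 1)) := by fun_prop
  refine MeasureTheory.Integrable.mono'
    (g := fun θ => (t ^ 2) ^ (-(lam + 1)) * Real.sin θ ^ (2 * lam - 1))
    ((integrableOn_sin_rpow (by linarith)).const_mul _)
    hmeas.aestronglyMeasurable ?_
  filter_upwards [MeasureTheory.ae_restrict_mem measurableSet_Ioo] with θ hθ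
  have hs0 : 0 ≤ Real.sin θ ^ (2 * lam - 1) :=
    Real.rpow_nonneg (Real.sin_nonneg_of_nonneg_of_le_pi hθ.1.le hθ.2.le) _
  have hd0 : 0 ≤ (u ^ 2 + y ^ 2 + t ^ 2 - 2 * u * y * Real.cos θ) ^ (-(lam + 1)) :=
    Real.rpow_nonneg (le_trans ht2.le (hD θ)) _
  rw [Real.norm_eq_abs, abs_of_nonneg (mul_nonneg hs0 hd0),
    mul_comm ((t ^ 2) ^ (-(lam + 1)))]
  exact mul_le_mul_of_nonneg_left (hC θ) hs0

set_option maxHeartbeats 1000000 in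
/-- Kernel comparison: the maximum principle at the level of the Poisson kernel. -/
lemma PK_le_of_not_mem {lam a b t u x z : ℝ} (hlam : 0 < lam) (ha : 0 ≤ a) (hab : a < b)
    (hx : x ∈ Set.Ioo a b) (hz : 0 < z) (hzx₁ : b - a ≤ |z - x|) (hzx₂ : |z - x| ≤ 3 * (b - a))
    (hu : 0 < u) (ht : 0 < t) (hout : (u, t) ∉ boxI3 a b) :
    PK lam t u x ≤ (19:ℝ) ^ (lam + 1) * PK lam t u z := by
  have pi_pos := Real.pi_pos
  have hx0 : 0 < x := lt_of_le_of_lt ha hx.1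
  have h19 : (0:ℝ) < (19:ℝ) := by norm_num
  -- the key pointwise estimate
  have key : ∀ θ ∈ Set.Ioo (0:ℝ) Real.pi,
      Real.sin θ ^ (2 * lam - 1) *
          (u ^ 2 + x ^ 2 + t ^ 2 - 2 * u * x * Real.cos θ) ^ (-(lam + 1))
        ≤ (19:ℝ) ^ (lam + 1) * (Real.sin θ ^ (2 * lam - 1) *
            (u ^ 2 + z ^ 2 + t ^ 2 - 2 * u * z * Real.cos θ) ^ (-(lam + 1))) := by
    intro θ hθ
    set c := Real.cos θ with hc
    have hc1 : c ≤ 1 := Real.cos_le_one θ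
    have hcm1 : -1 ≤ c := Real.neg_one_le_cos θ
    set Dx : ℝ := u ^ 2 + x ^ 2 + t ^ 2 - 2 * u * x * c with hDxdef
    set Dz : ℝ := u ^ 2 + z ^ 2 + t ^ 2 - 2 * u * z * c with hDzdef
    have hDxt : t ^ 2 ≤ Dx := by
      nlinarith [mul_nonneg hu.le hx0.le, sq_nonneg (u - x)]
    have hDxpos : 0 < Dx := lt_of_lt_of_le (by positivity) hDxt
    have hDzpos : 0 < Dz := by
      nlinarith [mul_nonneg hu.le hz.le, sq_nonneg (u - z)]
    -- distance estimate: `(x - z)² ≤ 9 Dx`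
    have habs : (z - x) ^ 2 ≤ 9 * (b - a) ^ 2 := by
      have h1 : |z - x| ^ 2 ≤ (3 * (b - a)) ^ 2 := pow_le_pow_left₀ (abs_nonneg _) hzx₂ 2
      rw [sq_abs] at h1
      nlinarith [h1]
    have hout' : u ∉ tri a b ∨ t ∉ Set.Icc 0 (3 * (b - a)) := by
      by_contra hcon
      push_neg at hcon
      exact hout (Set.mem_prod.mpr ⟨hcon.1, hcon.2⟩)
    have hd : (x - z) ^ 2 ≤ 9 * Dx := by
      rcases hout' with h | h
      · -- `u` lies outside `3I`
        have hio : u ∉ Set.Ioo ((a + b) / 2 - 3 * (b - a) / 2) ((a + b) / 2 + 3 * (b - a) / 2) :=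
          fun hmem => h ⟨hmem, hu⟩
        rw [Set.mem_Ioo, not_and_or, not_lt, not_lt] at hio
        have hA2 : (b - a) ^ 2 ≤ (u - x) ^ 2 := by
          rcases hio with h2 | h2
          · nlinarith [hx.1, hx.2]
          · nlinarith [hx.1, hx.2]
        nlinarith [mul_nonneg (mul_nonneg hu.le hx0.le) (by linarith : (0:ℝ) ≤ 1 - c)]
      · -- `t` is large
        have h3 : 3 * (b - a) < t := by
          rw [Set.mem_Icc, not_and_or, not_le, not_le] at h
          rcases h with h2 | h2
          · exact absurd ht.le (not_le.mpr h2)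
          · exact h2
        nlinarith [mul_nonneg (mul_nonneg hu.le hx0.le) (by linarith : (0:ℝ) ≤ 1 - c), hab]
    -- geometric inequality: `Dz ≤ 16 Dx ≤ 19 Dx`
    have hK : (x - u * c) ^ 2 ≤ Dx := by
      nlinarith [mul_nonneg (sq_nonneg u)
        (mul_nonneg (by linarith : (0:ℝ) ≤ 1 - c) (by linarith : (0:ℝ) ≤ 1 + c))]
    have hgeom : Dz ≤ 16 * Dx := by
      nlinarith [sq_nonneg (z - x - 3 * (x - u * c)), hd, hK]
    have hdiv : Dz / 19 ≤ Dx := by linarith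
    have hrpow : Dx ^ (-(lam + 1)) ≤ (Dz / 19) ^ (-(lam + 1)) :=
      Real.rpow_le_rpow_of_nonpos (by positivity) hdiv (by linarith)
    have heq : (Dz / 19) ^ (-(lam + 1)) = (19:ℝ) ^ (lam + 1) * Dz ^ (-(lam + 1)) := by
      rw [Real.div_rpow hDzpos.le h19.le, Real.rpow_neg h19.le, div_inv_eq_mul]
      ring
    have hs0 : 0 ≤ Real.sin θ ^ (2 * lam - 1) :=
      Real.rpow_nonneg (Real.sin_nonneg_of_nonneg_of_le_pi hθ.1.le hθ.2.le) _
    calc Real.sin θ ^ (2 * lam - 1) * Dx ^ (-(lam + 1))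
        ≤ Real.sin θ ^ (2 * lam - 1) * ((19:ℝ) ^ (lam + 1) * Dz ^ (-(lam + 1))) := by
          apply mul_le_mul_of_nonneg_left _ hs0
          rw [← heq]
          exact hrpow
      _ = (19:ℝ) ^ (lam + 1) * (Real.sin θ ^ (2 * lam - 1) * Dz ^ (-(lam + 1))) := by ring
  -- integrate the pointwise estimate
  have hix := integrableOn_PK_integrand (lam := lam) (t := t) (u := u) (y := x) hlam hu.le
    hx0.le ht.ne'
  have hiz := integrableOn_PK_integrand (lam := lam) (t := t) (u := u) (y := z) hlam hu.le
    hz.le ht.ne'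
  have hint : (∫ θ in Set.Ioo (0:ℝ) Real.pi, Real.sin θ ^ (2 * lam - 1) *
        (u ^ 2 + x ^ 2 + t ^ 2 - 2 * u * x * Real.cos θ) ^ (-(lam + 1)))
      ≤ ∫ θ in Set.Ioo (0:ℝ) Real.pi, (19:ℝ) ^ (lam + 1) * (Real.sin θ ^ (2 * lam - 1) *
        (u ^ 2 + z ^ 2 + t ^ 2 - 2 * u * z * Real.cos θ) ^ (-(lam + 1))) :=
    MeasureTheory.setIntegral_mono_on hix (hiz.const_mul _) measurableSet_Ioo key
  rw [MeasureTheory.integral_const_mul] at hint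
  unfold PK
  calc (2 * lam * t / Real.pi) * ∫ θ in Set.Ioo (0:ℝ) Real.pi, Real.sin θ ^ (2 * lam - 1) *
        (u ^ 2 + x ^ 2 + t ^ 2 - 2 * u * x * Real.cos θ) ^ (-(lam + 1))
      ≤ (2 * lam * t / Real.pi) * ((19:ℝ) ^ (lam + 1) *
        ∫ θ in Set.Ioo (0:ℝ) Real.pi, Real.sin θ ^ (2 * lam - 1) *
          (u ^ 2 + z ^ 2 + t ^ 2 - 2 * u * z * Real.cos θ) ^ (-(lam + 1))) :=
        mul_le_mul_of_nonneg_left hint (by positivity)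
    _ = (19:ℝ) ^ (lam + 1) * ((2 * lam * t / Real.pi) *
        ∫ θ in Set.Ioo (0:ℝ) Real.pi, Real.sin θ ^ (2 * lam - 1) *
          (u ^ 2 + z ^ 2 + t ^ 2 - 2 * u * z * Real.cos θ) ^ (-(lam + 1))) := by ring

/-- Maximum principle for the Bessel Poisson extension: if `x ∈ I` and
`|I| ≤ |z − x| ≤ 3|I|` with `z ∈ ℝ₊`, then
`P*_μ(g · 1_{ℝ²₊₊ ∖ 3Î})(x) ≤ 19^{λ+1} P*_μ(g)(z)`; in particular, if
`P*_μ(g)(z) ≤ κ` then `P*_μ(g · 1_{ℝ²₊₊ ∖ 3Î})(x) ≤ 19^{λ+1} κ`. -/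
theorem bessel_poisson_maximum_principle (lam : ℝ) (hlam : 0 < lam)
    (μ : Measure (ℝ × ℝ)) (g : ℝ × ℝ → ℝ≥0∞) (hg : Measurable g)
    (a b : ℝ) (ha : 0 ≤ a) (hab : a < b)
    (x z : ℝ) (hx : x ∈ Set.Ioo a b) (hz : 0 < z)
    (hzx₁ : b - a ≤ |z - x|) (hzx₂ : |z - x| ≤ 3 * (b - a)) :
    Padj lam μ (((Set.Ioi (0 : ℝ) ×ˢ Set.Ioi (0 : ℝ)) \ boxI3 a b).indicator g) x
        ≤ ENNReal.ofReal ((19 : ℝ) ^ (lam + 1)) * Padj lam μ g z ∧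
      ∀ κ : ℝ≥0∞, Padj lam μ g z ≤ κ →
        Padj lam μ (((Set.Ioi (0 : ℝ) ×ˢ Set.Ioi (0 : ℝ)) \ boxI3 a b).indicator g) x
          ≤ ENNReal.ofReal ((19 : ℝ) ^ (lam + 1)) * κ := by
  have h19 : (0:ℝ) ≤ (19:ℝ) ^ (lam + 1) := Real.rpow_nonneg (by norm_num) _
  have key : Padj lam μ (((Set.Ioi (0 : ℝ) ×ˢ Set.Ioi (0 : ℝ)) \ boxI3 a b).indicator g) x
      ≤ ENNReal.ofReal ((19 : ℝ) ^ (lam + 1)) * Padj lam μ g z := by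
    unfold Padj
    rw [← MeasureTheory.lintegral_const_mul' _ _ ENNReal.ofReal_ne_top]
    apply MeasureTheory.setLIntegral_mono' (measurableSet_Ioi.prod measurableSet_Ioi)
    rintro ⟨u, t⟩ hp
    by_cases hmem : (u, t) ∈ (Set.Ioi (0 : ℝ) ×ˢ Set.Ioi (0 : ℝ)) \ boxI3 a b
    · rw [Set.indicator_of_mem hmem]
      have hker := PK_le_of_not_mem hlam ha hab hx hz hzx₁ hzx₂ hp.1 hp.2 hmem.2
      calc ENNReal.ofReal (PK lam (u, t).2 (u, t).1 x) * g (u, t)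
          ≤ ENNReal.ofReal ((19:ℝ) ^ (lam + 1) * PK lam (u, t).2 (u, t).1 z) * g (u, t) :=
            mul_le_mul_left (ENNReal.ofReal_le_ofReal hker) _
        _ = ENNReal.ofReal ((19:ℝ) ^ (lam + 1)) *
              (ENNReal.ofReal (PK lam (u, t).2 (u, t).1 z) * g (u, t)) := by
            rw [ENNReal.ofReal_mul h19, mul_assoc]
    · rw [Set.indicator_of_notMem hmem, mul_zero]
      exact zero_le
  exact ⟨key, fun κ hκ => key.trans (mul_le_mul_right hκ _)⟩
end

section
/- Let λ > 0 and let x, y, s, t > 0 satisfy 0 < t ≤ s and |x − y| ≥ s. Then (t/s) · P_s(x,y) ≤ P_t(x,y) ≤ 2^{λ+1} (t/s) · P_s(x,y). -/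
open MeasureTheory Set ENNReal

set_option maxHeartbeats 1600000 in
/-- Comparison of the kernel at two heights: if `0 < t ≤ s ≤ |x − y|`,
then `(t/s) P_s(x, y) ≤ P_t(x, y) ≤ 2^{λ+1} (t/s) P_s(x, y)`. -/
theorem bessel_poisson_kernel_height_comparison (lam : ℝ) (hlam : 0 < lam)
    (x y s t : ℝ) (hx : 0 < x) (hy : 0 < y) (ht : 0 < t) (hts : t ≤ s)
    (hxy : s ≤ |x - y|) :
    t / s * PK lam s x y ≤ PK lam t x y ∧
      PK lam t x y ≤ (2 : ℝ) ^ (lam + 1) * (t / s * PK lam s x y) :=  by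
  have hs : 0 < s := lt_of_lt_of_le ht hts
  have hpi := Real.pi_pos
  have hct : 0 ≤ 2 * lam * t / Real.pi := by positivity
  have h2pos : (0:ℝ) < 2 ^ (lam + 1) := Real.rpow_pos_of_pos two_pos _
  simp only [PK]
  set ft : ℝ → ℝ := fun θ =>
    Real.sin θ ^ (2 * lam - 1) *
      (x ^ 2 + y ^ 2 + t ^ 2 - 2 * x * y * Real.cos θ) ^ (-(lam + 1)) with hftdef
  set fs : ℝ → ℝ := fun θ =>
    Real.sin θ ^ (2 * lam - 1) *
      (x ^ 2 + y ^ 2 + s ^ 2 - 2 * x * y * Real.cos θ) ^ (-(lam + 1)) with hfsdef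
  have hmt : Measurable ft := by rw [hftdef]; measurability
  have hms : Measurable fs := by rw [hfsdef]; measurability
  have key : ∀ θ ∈ Set.Ioo (0:ℝ) Real.pi,
      0 ≤ fs θ ∧ fs θ ≤ ft θ ∧ ft θ ≤ 2 ^ (lam + 1) * fs θ := by
    intro θ hθ
    have hsin : 0 ≤ Real.sin θ ^ (2 * lam - 1) :=
      Real.rpow_nonneg (Real.sin_nonneg_of_nonneg_of_le_pi hθ.1.le hθ.2.le) _
    have h1 : s ^ 2 ≤ (x - y) ^ 2 := by
      rw [← sq_abs (x - y)]
      exact pow_le_pow_left₀ hs.le hxy 2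
    have hA : s ^ 2 ≤ x ^ 2 + y ^ 2 - 2 * x * y * Real.cos θ := by
      nlinarith [Real.cos_le_one θ, mul_pos hx hy]
    have ht2 : t ^ 2 ≤ s ^ 2 := pow_le_pow_left₀ ht.le hts 2
    have hbt : (0:ℝ) < x ^ 2 + y ^ 2 + t ^ 2 - 2 * x * y * Real.cos θ := by
      linarith [pow_pos hs 2, sq_nonneg t]
    have hbs : (0:ℝ) < x ^ 2 + y ^ 2 + s ^ 2 - 2 * x * y * Real.cos θ := by
      linarith [pow_pos hs 2]
    refine ⟨mul_nonneg hsin (Real.rpow_nonneg hbs.le _), ?_, ?_⟩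
    · apply mul_le_mul_of_nonneg_left _ hsin
      apply Real.rpow_le_rpow_of_nonpos hbt (by linarith) (by linarith)
    · have hhalf : (0:ℝ) < (x ^ 2 + y ^ 2 + s ^ 2 - 2 * x * y * Real.cos θ) / 2 := by linarith
      have hle : (x ^ 2 + y ^ 2 + s ^ 2 - 2 * x * y * Real.cos θ) / 2
          ≤ x ^ 2 + y ^ 2 + t ^ 2 - 2 * x * y * Real.cos θ := by
        linarith [sq_nonneg t]
      have h2 : (x ^ 2 + y ^ 2 + t ^ 2 - 2 * x * y * Real.cos θ) ^ (-(lam + 1))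
          ≤ ((x ^ 2 + y ^ 2 + s ^ 2 - 2 * x * y * Real.cos θ) / 2) ^ (-(lam + 1)) :=
        Real.rpow_le_rpow_of_nonpos hhalf hle (by linarith)
      have h3 : ((x ^ 2 + y ^ 2 + s ^ 2 - 2 * x * y * Real.cos θ) / 2) ^ (-(lam + 1))
          = 2 ^ (lam + 1) * (x ^ 2 + y ^ 2 + s ^ 2 - 2 * x * y * Real.cos θ) ^ (-(lam + 1)) := by
        rw [Real.div_rpow hbs.le (by norm_num : (0:ℝ) ≤ 2),
          Real.rpow_neg (by norm_num : (0:ℝ) ≤ 2), div_eq_mul_inv, inv_inv]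
        ring
      calc ft θ ≤ Real.sin θ ^ (2 * lam - 1) *
            (((x ^ 2 + y ^ 2 + s ^ 2 - 2 * x * y * Real.cos θ) / 2) ^ (-(lam + 1))) :=
            mul_le_mul_of_nonneg_left h2 hsin
        _ = 2 ^ (lam + 1) * fs θ := by rw [h3, hfsdef]; ring
  by_cases hint : IntegrableOn fs (Set.Ioo 0 Real.pi)
  · have hint_t : IntegrableOn ft (Set.Ioo 0 Real.pi) := by
      apply Integrable.mono' (hint.const_mul ((2:ℝ) ^ (lam + 1)))
        hmt.aestronglyMeasurable.restrict
      filter_upwards [ae_restrict_mem measurableSet_Ioo] with θ hθ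
      rw [Real.norm_eq_abs, abs_of_nonneg (le_trans (key θ hθ).1 (key θ hθ).2.1)]
      exact (key θ hθ).2.2
    have hIle : (∫ θ in Set.Ioo 0 Real.pi, fs θ) ≤ ∫ θ in Set.Ioo 0 Real.pi, ft θ :=
      setIntegral_mono_on hint hint_t measurableSet_Ioo fun θ hθ => (key θ hθ).2.1
    have hIle2 : (∫ θ in Set.Ioo 0 Real.pi, ft θ)
        ≤ 2 ^ (lam + 1) * ∫ θ in Set.Ioo 0 Real.pi, fs θ := by
      rw [← MeasureTheory.integral_const_mul]
      exact setIntegral_mono_on hint_t (hint.const_mul _) measurableSet_Ioo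
        fun θ hθ => (key θ hθ).2.2
    have hceq : ∀ I : ℝ, t / s * (2 * lam * s / Real.pi * I) = 2 * lam * t / Real.pi * I := by
      intro I
      field_simp
    have hceq2 : ∀ I : ℝ, (2:ℝ) ^ (lam + 1) * (t / s * (2 * lam * s / Real.pi * I))
        = 2 * lam * t / Real.pi * (2 ^ (lam + 1) * I) := by
      intro I
      field_simp
    constructor
    · rw [hceq]
      exact mul_le_mul_of_nonneg_left hIle hct
    · rw [hceq2]
      exact mul_le_mul_of_nonneg_left hIle2 hct
  · have hint_t : ¬ IntegrableOn ft (Set.Ioo 0 Real.pi) := by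
      intro h
      apply hint
      apply Integrable.mono' h hms.aestronglyMeasurable.restrict
      filter_upwards [ae_restrict_mem measurableSet_Ioo] with θ hθ
      rw [Real.norm_eq_abs, abs_of_nonneg (key θ hθ).1]
      exact (key θ hθ).2.1
    rw [integral_undef hint, integral_undef hint_t]
    constructor <;> simp
end

section
/- Let λ > 0 and let x, x', y, t > 0 satisfy |x − x'| ≤ t/2 and |x − y| ≥ t. Then (4/9)^{λ+1} P_t(x',y) ≤ P_t(x,y) ≤ 4^{λ+1} P_t(x',y). -/
open MeasureTheory Set ENNReal

private lemma Dpos (u y t θ : ℝ) (ht : 0 < t) :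
    0 < u ^ 2 + y ^ 2 + t ^ 2 - 2 * u * y * Real.cos θ := by
  nlinarith [sq_nonneg (u - y * Real.cos θ), Real.cos_sq_le_one θ, sq_nonneg y, sq_nonneg t]

private lemma Dle (u v y t θ : ℝ) (ht : 0 < t) (h : |u - v| ≤ t / 2) :
    v ^ 2 + y ^ 2 + t ^ 2 - 2 * v * y * Real.cos θ ≤
      2 * (u ^ 2 + y ^ 2 + t ^ 2 - 2 * u * y * Real.cos θ) := by
  have hd : (u - v) ^ 2 ≤ (t / 2) ^ 2 := by
    have := abs_le.1 h
    nlinarith [this.1, this.2]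
  nlinarith [sq_nonneg (2 * u - v - y * Real.cos θ), Real.cos_sq_le_one θ, sq_nonneg y]

private lemma rpow_bounds (p A B : ℝ) (hp : 0 < p) (hA : 0 < A) (hB : 0 < B)
    (h1 : A ≤ 2 * B) (h2 : B ≤ 2 * A) :
    (4 / 9 : ℝ) ^ p * B ^ (-p) ≤ A ^ (-p) ∧ A ^ (-p) ≤ (4 : ℝ) ^ p * B ^ (-p) := by
  have eA : A ^ (-p) = (A⁻¹) ^ p := by
    rw [Real.inv_rpow hA.le, ← Real.rpow_neg hA.le]
  have eB : B ^ (-p) = (B⁻¹) ^ p := by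
    rw [Real.inv_rpow hB.le, ← Real.rpow_neg hB.le]
  constructor
  · have e : (4 / 9 : ℝ) ^ p * B ^ (-p) = ((4 / 9) * B⁻¹) ^ p := by
      rw [eB, ← Real.mul_rpow (by norm_num) (inv_nonneg.2 hB.le)]
    rw [e, eA]
    apply Real.rpow_le_rpow (by positivity) _ hp.le
    rw [inv_eq_one_div B, inv_eq_one_div A, mul_one_div, div_le_div_iff₀ hB hA]
    nlinarith
  · have e : (4 : ℝ) ^ p * B ^ (-p) = (4 * B⁻¹) ^ p := by
      rw [eB, ← Real.mul_rpow (by norm_num) (inv_nonneg.2 hB.le)]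
    rw [e, eA]
    apply Real.rpow_le_rpow (inv_nonneg.2 hA.le) _ hp.le
    rw [inv_eq_one_div A, inv_eq_one_div B, mul_one_div, div_le_div_iff₀ hA hB]
    nlinarith

private lemma pointwise_bounds (lam x x' y t : ℝ) (hlam : 0 < lam) (ht : 0 < t)
    (hxx' : |x - x'| ≤ t / 2) (θ : ℝ) (hθ : θ ∈ Set.Ioo (0 : ℝ) Real.pi) :
    0 ≤ Real.sin θ ^ (2 * lam - 1) *
        (x ^ 2 + y ^ 2 + t ^ 2 - 2 * x * y * Real.cos θ) ^ (-(lam + 1)) ∧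
    (4 / 9 : ℝ) ^ (lam + 1) *
        (Real.sin θ ^ (2 * lam - 1) *
          (x' ^ 2 + y ^ 2 + t ^ 2 - 2 * x' * y * Real.cos θ) ^ (-(lam + 1))) ≤
      Real.sin θ ^ (2 * lam - 1) *
        (x ^ 2 + y ^ 2 + t ^ 2 - 2 * x * y * Real.cos θ) ^ (-(lam + 1)) ∧
    Real.sin θ ^ (2 * lam - 1) *
        (x ^ 2 + y ^ 2 + t ^ 2 - 2 * x * y * Real.cos θ) ^ (-(lam + 1)) ≤
      (4 : ℝ) ^ (lam + 1) *
        (Real.sin θ ^ (2 * lam - 1) *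
          (x' ^ 2 + y ^ 2 + t ^ 2 - 2 * x' * y * Real.cos θ) ^ (-(lam + 1))) := by
  have hs : 0 < Real.sin θ := Real.sin_pos_of_pos_of_lt_pi hθ.1 hθ.2
  have hS : 0 ≤ Real.sin θ ^ (2 * lam - 1) := Real.rpow_nonneg hs.le _
  have hA : 0 < x ^ 2 + y ^ 2 + t ^ 2 - 2 * x * y * Real.cos θ := Dpos x y t θ ht
  have hB : 0 < x' ^ 2 + y ^ 2 + t ^ 2 - 2 * x' * y * Real.cos θ := Dpos x' y t θ ht
  have h1 : x ^ 2 + y ^ 2 + t ^ 2 - 2 * x * y * Real.cos θ ≤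
      2 * (x' ^ 2 + y ^ 2 + t ^ 2 - 2 * x' * y * Real.cos θ) :=
    Dle x' x y t θ ht (by rwa [abs_sub_comm])
  have h2 : x' ^ 2 + y ^ 2 + t ^ 2 - 2 * x' * y * Real.cos θ ≤
      2 * (x ^ 2 + y ^ 2 + t ^ 2 - 2 * x * y * Real.cos θ) :=
    Dle x x' y t θ ht hxx'
  obtain ⟨hlo, hhi⟩ := rpow_bounds (lam + 1) _ _ (by linarith) hA hB h1 h2
  refine ⟨mul_nonneg hS (Real.rpow_nonneg hA.le _), ?_, ?_⟩
  · calc (4 / 9 : ℝ) ^ (lam + 1) * (Real.sin θ ^ (2 * lam - 1) *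
          (x' ^ 2 + y ^ 2 + t ^ 2 - 2 * x' * y * Real.cos θ) ^ (-(lam + 1)))
        = Real.sin θ ^ (2 * lam - 1) * ((4 / 9 : ℝ) ^ (lam + 1) *
          (x' ^ 2 + y ^ 2 + t ^ 2 - 2 * x' * y * Real.cos θ) ^ (-(lam + 1))) := by ring
    _ ≤ Real.sin θ ^ (2 * lam - 1) *
          (x ^ 2 + y ^ 2 + t ^ 2 - 2 * x * y * Real.cos θ) ^ (-(lam + 1)) :=
        mul_le_mul_of_nonneg_left hlo hS
  · calc Real.sin θ ^ (2 * lam - 1) *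
          (x ^ 2 + y ^ 2 + t ^ 2 - 2 * x * y * Real.cos θ) ^ (-(lam + 1))
        ≤ Real.sin θ ^ (2 * lam - 1) * ((4 : ℝ) ^ (lam + 1) *
          (x' ^ 2 + y ^ 2 + t ^ 2 - 2 * x' * y * Real.cos θ) ^ (-(lam + 1))) :=
        mul_le_mul_of_nonneg_left hhi hS
    _ = (4 : ℝ) ^ (lam + 1) * (Real.sin θ ^ (2 * lam - 1) *
          (x' ^ 2 + y ^ 2 + t ^ 2 - 2 * x' * y * Real.cos θ) ^ (-(lam + 1))) := by ring

/-- Comparison of the kernel at two nearby poles: if `|x − x'| ≤ t/2`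
and `|x − y| ≥ t`, then `(4/9)^{λ+1} P_t(x', y) ≤ P_t(x, y) ≤ 4^{λ+1} P_t(x', y)`. -/
theorem bessel_poisson_kernel_pole_comparison (lam : ℝ) (hlam : 0 < lam)
    (x x' y t : ℝ) (hx : 0 < x) (hx' : 0 < x') (hy : 0 < y) (ht : 0 < t)
    (hxx' : |x - x'| ≤ t / 2) (hxy : t ≤ |x - y|) :
    (4 / 9 : ℝ) ^ (lam + 1) * PK lam t x' y ≤ PK lam t x y ∧
      PK lam t x y ≤ (4 : ℝ) ^ (lam + 1) * PK lam t x' y := by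
  set f : ℝ → ℝ → ℝ := fun u θ => Real.sin θ ^ (2 * lam - 1) *
      (u ^ 2 + y ^ 2 + t ^ 2 - 2 * u * y * Real.cos θ) ^ (-(lam + 1)) with hf
  have hfm : ∀ u : ℝ, Measurable (f u) := fun u => by
    rw [hf]; fun_prop
  have hc : (0 : ℝ) ≤ 2 * lam * t / Real.pi := by positivity
  have hPK : ∀ u, PK lam t u y =
      (2 * lam * t / Real.pi) * ∫ θ in Set.Ioo (0 : ℝ) Real.pi, f u θ := fun u => rfl
  have hxx'' : |x' - x| ≤ t / 2 := by rwa [abs_sub_comm]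
  have hnnx : 0 ≤ᵐ[volume.restrict (Set.Ioo (0:ℝ) Real.pi)] f x :=
    (ae_restrict_iff' measurableSet_Ioo).2 (Filter.Eventually.of_forall fun θ hθ =>
      (pointwise_bounds lam x x' y t hlam ht hxx' θ hθ).1)
  have hnnx' : 0 ≤ᵐ[volume.restrict (Set.Ioo (0:ℝ) Real.pi)] f x' :=
    (ae_restrict_iff' measurableSet_Ioo).2 (Filter.Eventually.of_forall fun θ hθ =>
      (pointwise_bounds lam x' x y t hlam ht hxx'' θ hθ).1)
  have hub : ∀ᵐ θ ∂(volume.restrict (Set.Ioo (0:ℝ) Real.pi)),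
      f x θ ≤ (4 : ℝ) ^ (lam + 1) * f x' θ :=
    (ae_restrict_iff' measurableSet_Ioo).2 (Filter.Eventually.of_forall fun θ hθ =>
      (pointwise_bounds lam x x' y t hlam ht hxx' θ hθ).2.2)
  have hlb : ∀ᵐ θ ∂(volume.restrict (Set.Ioo (0:ℝ) Real.pi)),
      (4 / 9 : ℝ) ^ (lam + 1) * f x' θ ≤ f x θ :=
    (ae_restrict_iff' measurableSet_Ioo).2 (Filter.Eventually.of_forall fun θ hθ =>
      (pointwise_bounds lam x x' y t hlam ht hxx' θ hθ).2.1)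
  have key : (4 / 9 : ℝ) ^ (lam + 1) * ∫ θ in Set.Ioo (0:ℝ) Real.pi, f x' θ ≤
      (∫ θ in Set.Ioo (0:ℝ) Real.pi, f x θ) ∧
      (∫ θ in Set.Ioo (0:ℝ) Real.pi, f x θ) ≤
      (4 : ℝ) ^ (lam + 1) * ∫ θ in Set.Ioo (0:ℝ) Real.pi, f x' θ := by
    by_cases hI : IntegrableOn (f x') (Set.Ioo (0:ℝ) Real.pi) volume
    · have hIc : Integrable (fun θ => (4 : ℝ) ^ (lam + 1) * f x' θ)
          (volume.restrict (Set.Ioo (0:ℝ) Real.pi)) := hI.const_mul _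
      have hIx : IntegrableOn (f x) (Set.Ioo (0:ℝ) Real.pi) volume := by
        refine Integrable.mono' hIc (hfm x).aestronglyMeasurable ?_
        filter_upwards [hub, hnnx] with θ h1 h2
        rwa [Real.norm_eq_abs, abs_of_nonneg h2]
      constructor
      · rw [← MeasureTheory.integral_const_mul]
        exact integral_mono_of_nonneg (hnnx'.mono fun θ h => by simp only [Pi.zero_apply] at h ⊢; positivity) hIx hlb
      · rw [← MeasureTheory.integral_const_mul]
        exact integral_mono_of_nonneg hnnx hIc hub
    · have hIx : ¬ IntegrableOn (f x) (Set.Ioo (0:ℝ) Real.pi) volume := by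
        intro hIx
        apply hI
        have hpos : (0 : ℝ) < (4 / 9 : ℝ) ^ (lam + 1) := by positivity
        refine Integrable.mono' (hIx.const_mul (((4 / 9 : ℝ) ^ (lam + 1))⁻¹))
          (hfm x').aestronglyMeasurable ?_
        filter_upwards [hlb, hnnx'] with θ h1 h2
        rw [Real.norm_eq_abs, abs_of_nonneg h2, inv_mul_eq_div, le_div_iff₀ hpos]
        linarith [h1]
      rw [MeasureTheory.integral_undef hIx, MeasureTheory.integral_undef hI]
      norm_num
  rw [hPK x, hPK x']
  constructor
  · calc (4 / 9 : ℝ) ^ (lam + 1) * ((2 * lam * t / Real.pi) *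
        ∫ θ in Set.Ioo (0:ℝ) Real.pi, f x' θ)
        = (2 * lam * t / Real.pi) * ((4 / 9 : ℝ) ^ (lam + 1) *
          ∫ θ in Set.Ioo (0:ℝ) Real.pi, f x' θ) := by ring
    _ ≤ (2 * lam * t / Real.pi) * ∫ θ in Set.Ioo (0:ℝ) Real.pi, f x θ :=
        mul_le_mul_of_nonneg_left key.1 hc
  · calc (2 * lam * t / Real.pi) * ∫ θ in Set.Ioo (0:ℝ) Real.pi, f x θ
        ≤ (2 * lam * t / Real.pi) * ((4 : ℝ) ^ (lam + 1) *
          ∫ θ in Set.Ioo (0:ℝ) Real.pi, f x' θ) :=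
        mul_le_mul_of_nonneg_left key.2 hc
    _ = (4 : ℝ) ^ (lam + 1) * ((2 * lam * t / Real.pi) *
          ∫ θ in Set.Ioo (0:ℝ) Real.pi, f x' θ) := by ring
end

section
/- Let λ > 0, let σ be a Borel measure on ℝ₊, let J ⊂ ℝ₊ be a bounded interval with center x_J and length |J|, and let E ⊂ ℝ₊ be a Borel set such that |x − y| > |J| for every x ∈ J and y ∈ E. Then there exist constants 0 < c(λ) ≤ C(λ) < ∞, depending only on λ, such that for every x ∈ J and every t ∈ (0, |J|]: c(λ) · (t/|J|) · P_σ(1_E)(x_J, |J|) ≤ P_σ(1_E)(x, t) ≤ C(λ) · (t/|J|) · P_σ(1_E)(x_J, |J|). -/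
open MeasureTheory Set ENNReal

lemma quad_bound {u v y s T S : ℝ} (hv : 0 ≤ v) (hy : 0 ≤ y)
    (hs : 0 ≤ s) (hs2 : s ≤ 2) (huv : (u - v) ^ 2 ≤ (v - y) ^ 2 / 4)
    (hT : T ^ 2 ≤ (v - y) ^ 2) :
    (u - y) ^ 2 + T ^ 2 + 2 * u * y * s ≤ 14 * ((v - y) ^ 2 + S ^ 2 + 2 * v * y * s) := by
  have hS : (0:ℝ) ≤ S ^ 2 := sq_nonneg _
  have key2 : y ^ 2 * s ≤ 2 * v * y * s + 8 * (v - y) ^ 2 := by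
    rcases le_total (y / 2) v with h | h
    · nlinarith [mul_nonneg hy hs]
    · have h1 : (y / 2) ^ 2 ≤ (v - y) ^ 2 := by nlinarith
      nlinarith [mul_nonneg (mul_nonneg (mul_nonneg hv hy) hs) (by norm_num : (0:ℝ) ≤ 2),
        mul_nonneg (mul_nonneg (sq_nonneg y) hs) (by linarith : (0:ℝ) ≤ 2 - s),
        mul_nonneg (mul_nonneg hv hy) hs]
  nlinarith [sq_nonneg (u - 2 * v + y), sq_nonneg (2 * (u - v) - y * s / 2),
    mul_nonneg (mul_nonneg (sq_nonneg y) hs) (by linarith : (0:ℝ) ≤ 2 - s),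
    mul_nonneg (mul_nonneg hv hy) hs]

lemma D_compare {x x' y t L c : ℝ} (hx' : 0 ≤ x') (hy : 0 ≤ y)
    (hc1 : -1 ≤ c) (hc2 : c ≤ 1) (huv : (x - x') ^ 2 ≤ (x' - y) ^ 2 / 4)
    (ht : t ^ 2 ≤ (x' - y) ^ 2) :
    x ^ 2 + y ^ 2 + t ^ 2 - 2 * x * y * c ≤
      14 * (x' ^ 2 + y ^ 2 + L ^ 2 - 2 * x' * y * c) := by
  have h := quad_bound (u := x) (v := x') (y := y) (s := 1 - c) (T := t) (S := L)
    hx' hy (by linarith) (by linarith) huv ht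
  nlinarith [h]

lemma D_pos {x y t c : ℝ} (hx : 0 ≤ x) (hy : 0 ≤ y) (ht : 0 < t) (hc : c ≤ 1) :
    0 < x ^ 2 + y ^ 2 + t ^ 2 - 2 * x * y * c := by
  nlinarith [sq_nonneg (x - y), mul_nonneg (mul_nonneg hx hy) (by linarith : (0:ℝ) ≤ 1 - c)]

lemma rpow_compare {p D1 D2 : ℝ} (hp : 0 ≤ p) (h1 : 0 < D1) (h2 : 0 < D2)
    (h : D1 ≤ 14 * D2) : D2 ^ (-p) ≤ 14 ^ p * D1 ^ (-p) := by
  have h14 : (0:ℝ) < 14 := by norm_num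
  have key : (14 * D2) ^ (-p) ≤ D1 ^ (-p) :=
    Real.rpow_le_rpow_of_nonpos h1 h (neg_nonpos.mpr hp)
  have expand : (14 * D2 : ℝ) ^ (-p) = 14 ^ (-p) * D2 ^ (-p) := Real.mul_rpow h14.le h2.le
  have hid : D2 ^ (-p) = 14 ^ p * ((14 * D2) ^ (-p)) := by
    rw [expand, ← mul_assoc, ← Real.rpow_add h14]
    simp
  rw [hid]
  exact mul_le_mul_of_nonneg_left key (Real.rpow_nonneg h14.le p)

lemma int_compare {μ : Measure ℝ} {s : Set ℝ} {f g : ℝ → ℝ}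
    (hf : AEStronglyMeasurable f (μ.restrict s)) (hg : AEStronglyMeasurable g (μ.restrict s))
    (hf0 : ∀ᵐ θ ∂μ.restrict s, 0 ≤ f θ) (hg0 : ∀ᵐ θ ∂μ.restrict s, 0 ≤ g θ)
    {C : ℝ} (hC : 0 < C)
    (hfg : ∀ᵐ θ ∂μ.restrict s, f θ ≤ C * g θ) (hgf : ∀ᵐ θ ∂μ.restrict s, g θ ≤ C * f θ) :
    C⁻¹ * ∫ θ in s, g θ ∂μ ≤ ∫ θ in s, f θ ∂μ ∧
      (∫ θ in s, f θ ∂μ) ≤ C * ∫ θ in s, g θ ∂μ := by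
  by_cases hInt : IntegrableOn g s μ
  · have hCg : Integrable (fun θ => C * g θ) (μ.restrict s) := hInt.const_mul C
    have hfInt : Integrable f (μ.restrict s) := by
      refine hCg.mono' hf ?_
      filter_upwards [hf0, hfg] with θ h0 h1
      rw [Real.norm_eq_abs, abs_of_nonneg h0]; exact h1
    constructor
    · have h1 : (∫ θ in s, g θ ∂μ) ≤ ∫ θ in s, C * f θ ∂μ :=
        integral_mono_ae hInt (hfInt.const_mul C) hgf
      rw [integral_const_mul] at h1
      have h2 := mul_le_mul_of_nonneg_left h1 (inv_nonneg.mpr hC.le)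
      rwa [inv_mul_cancel_left₀ hC.ne'] at h2
    · have h2 : (∫ θ in s, f θ ∂μ) ≤ ∫ θ in s, C * g θ ∂μ :=
        integral_mono_ae hfInt (hInt.const_mul C) hfg
      rwa [integral_const_mul] at h2
  · have hfnInt : ¬ IntegrableOn f s μ := by
      intro hf'
      refine hInt ((hf'.const_mul C).mono' hg ?_)
      filter_upwards [hg0, hgf] with θ h0 h1
      rw [Real.norm_eq_abs, abs_of_nonneg h0]; exact h1
    rw [integral_undef hfnInt, integral_undef hInt]
    simp

lemma PK_compare {lam : ℝ} (hlam : 0 < lam) {a b x y t : ℝ} (ha : 0 ≤ a) (hab : a < b)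
    (hx : x ∈ Set.Ioo a b) (hy : 0 < y) (hsx : b - a < |x - y|)
    (hsm : b - a < |(a + b) / 2 - y|) (ht : 0 < t) (htL : t ≤ b - a) :
    ((14:ℝ) ^ (lam + 1))⁻¹ * (t / (b - a)) * PK lam (b - a) ((a + b) / 2) y ≤ PK lam t x y ∧
      PK lam t x y ≤ (14:ℝ) ^ (lam + 1) * (t / (b - a)) * PK lam (b - a) ((a + b) / 2) y := by
  set m : ℝ := (a + b) / 2 with hm
  have hL : 0 < b - a := by linarith [hx.1, hx.2]
  have hx0 : 0 < x := lt_of_le_of_lt ha hx.1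
  have hm0 : 0 < m := by rw [hm]; linarith
  have hxm : (x - m) ^ 2 ≤ (b - a) ^ 2 / 4 := by
    rw [hm]; nlinarith [hx.1, hx.2]
  have hLx : (b - a) ^ 2 ≤ (x - y) ^ 2 := by
    have := mul_self_le_mul_self hL.le hsx.le
    nlinarith [sq_abs (x - y)]
  have hLm : (b - a) ^ 2 ≤ (m - y) ^ 2 := by
    have := mul_self_le_mul_self hL.le hsm.le
    nlinarith [sq_abs (m - y)]
  set p : ℝ := lam + 1 with hp
  have hp0 : 0 ≤ p := by rw [hp]; linarith
  set C : ℝ := (14:ℝ) ^ p with hC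
  have hCpos : 0 < C := Real.rpow_pos_of_pos (by norm_num) p
  set f : ℝ → ℝ := fun θ =>
    Real.sin θ ^ (2 * lam - 1) * (x ^ 2 + y ^ 2 + t ^ 2 - 2 * x * y * Real.cos θ) ^ (-p)
    with hf
  set g : ℝ → ℝ := fun θ =>
    Real.sin θ ^ (2 * lam - 1) * (m ^ 2 + y ^ 2 + (b - a) ^ 2 - 2 * m * y * Real.cos θ) ^ (-p)
    with hg
  have hfm : Measurable f := by rw [hf]; fun_prop
  have hgm : Measurable g := by rw [hg]; fun_prop
  -- pointwise comparisons on Ioo 0 π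
  have hptwise : ∀ θ ∈ Set.Ioo (0:ℝ) Real.pi,
      0 ≤ f θ ∧ 0 ≤ g θ ∧ f θ ≤ C * g θ ∧ g θ ≤ C * f θ := by
    intro θ hθ
    have hsin : 0 ≤ Real.sin θ := Real.sin_nonneg_of_nonneg_of_le_pi hθ.1.le hθ.2.le
    have hsp : 0 ≤ Real.sin θ ^ (2 * lam - 1) := Real.rpow_nonneg hsin _
    have hc1 : -1 ≤ Real.cos θ := Real.neg_one_le_cos θ
    have hc2 : Real.cos θ ≤ 1 := Real.cos_le_one θ
    have hDx : 0 < x ^ 2 + y ^ 2 + t ^ 2 - 2 * x * y * Real.cos θ :=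
      D_pos hx0.le hy.le ht hc2
    have hDm : 0 < m ^ 2 + y ^ 2 + (b - a) ^ 2 - 2 * m * y * Real.cos θ :=
      D_pos hm0.le hy.le hL hc2
    have hxleq : x ^ 2 + y ^ 2 + t ^ 2 - 2 * x * y * Real.cos θ ≤
        14 * (m ^ 2 + y ^ 2 + (b - a) ^ 2 - 2 * m * y * Real.cos θ) := by
      refine D_compare hm0.le hy.le hc1 hc2 ?_ ?_
      · calc (x - m) ^ 2 ≤ (b - a) ^ 2 / 4 := hxm
          _ ≤ (m - y) ^ 2 / 4 := by linarith
      · calc t ^ 2 ≤ (b - a) ^ 2 := by nlinarith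
          _ ≤ (m - y) ^ 2 := hLm
    have hmleq : m ^ 2 + y ^ 2 + (b - a) ^ 2 - 2 * m * y * Real.cos θ ≤
        14 * (x ^ 2 + y ^ 2 + t ^ 2 - 2 * x * y * Real.cos θ) := by
      refine D_compare hx0.le hy.le hc1 hc2 ?_ hLx
      calc (m - x) ^ 2 = (x - m) ^ 2 := by ring
        _ ≤ (b - a) ^ 2 / 4 := hxm
        _ ≤ (x - y) ^ 2 / 4 := by linarith
    refine ⟨mul_nonneg hsp (Real.rpow_nonneg hDx.le _),
      mul_nonneg hsp (Real.rpow_nonneg hDm.le _), ?_, ?_⟩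
    · have hr : (x ^ 2 + y ^ 2 + t ^ 2 - 2 * x * y * Real.cos θ) ^ (-p) ≤
          C * (m ^ 2 + y ^ 2 + (b - a) ^ 2 - 2 * m * y * Real.cos θ) ^ (-p) :=
        rpow_compare hp0 hDm hDx hmleq
      calc f θ ≤ Real.sin θ ^ (2 * lam - 1) *
            (C * (m ^ 2 + y ^ 2 + (b - a) ^ 2 - 2 * m * y * Real.cos θ) ^ (-p)) :=
          mul_le_mul_of_nonneg_left hr hsp
        _ = C * g θ := by rw [hg]; ring
    · have hr : (m ^ 2 + y ^ 2 + (b - a) ^ 2 - 2 * m * y * Real.cos θ) ^ (-p) ≤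
          C * (x ^ 2 + y ^ 2 + t ^ 2 - 2 * x * y * Real.cos θ) ^ (-p) :=
        rpow_compare hp0 hDx hDm hxleq
      calc g θ ≤ Real.sin θ ^ (2 * lam - 1) *
            (C * (x ^ 2 + y ^ 2 + t ^ 2 - 2 * x * y * Real.cos θ) ^ (-p)) :=
          mul_le_mul_of_nonneg_left hr hsp
        _ = C * f θ := by rw [hf]; ring
  have hmeas : MeasurableSet (Set.Ioo (0:ℝ) Real.pi) := measurableSet_Ioo
  have hcomp := int_compare (μ := volume) (s := Set.Ioo (0:ℝ) Real.pi)
    hfm.aestronglyMeasurable.restrict hgm.aestronglyMeasurable.restrict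
    (ae_restrict_of_forall_mem hmeas fun θ hθ => (hptwise θ hθ).1)
    (ae_restrict_of_forall_mem hmeas fun θ hθ => (hptwise θ hθ).2.1)
    hCpos
    (ae_restrict_of_forall_mem hmeas fun θ hθ => (hptwise θ hθ).2.2.1)
    (ae_restrict_of_forall_mem hmeas fun θ hθ => (hptwise θ hθ).2.2.2)
  have hfac : 0 < 2 * lam * t / Real.pi := by positivity
  have hpi : Real.pi ≠ 0 := Real.pi_ne_zero
  have hPKm : PK lam (b - a) m y = 2 * lam * (b - a) / Real.pi *
      ∫ θ in Set.Ioo (0:ℝ) Real.pi, g θ := rfl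
  have hPKx : PK lam t x y = 2 * lam * t / Real.pi *
      ∫ θ in Set.Ioo (0:ℝ) Real.pi, f θ := rfl
  have key1 : ∀ I : ℝ, C⁻¹ * (t / (b - a)) * (2 * lam * (b - a) / Real.pi * I) =
      2 * lam * t / Real.pi * (C⁻¹ * I) := by
    intro I; field_simp
  have key2 : ∀ I : ℝ, C * (t / (b - a)) * (2 * lam * (b - a) / Real.pi * I) =
      2 * lam * t / Real.pi * (C * I) := by
    intro I; field_simp
  constructor
  · rw [hPKm, hPKx, key1]
    exact mul_le_mul_of_nonneg_left hcomp.1 hfac.le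
  · rw [hPKm, hPKx, key2]
    exact mul_le_mul_of_nonneg_left hcomp.2 hfac.le

/-- If `E ⊂ ℝ₊` is a Borel set with `|x − y| > |J|` for all `x ∈ J`,
`y ∈ E`, then for `x ∈ J` and `0 < t ≤ |J|`,
`P_σ(1_E)(x, t) ≈ (t/|J|) P_σ(1_E)(x_J, |J|)` with constants depending only on `λ`. -/
theorem bessel_poisson_extension_comparison (lam : ℝ) (hlam : 0 < lam) :
    ∃ c C : ℝ, 0 < c ∧ c ≤ C ∧
      ∀ (σ : Measure ℝ) (a b : ℝ), 0 ≤ a → a < b →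
        ∀ E : Set ℝ, MeasurableSet E → E ⊆ Set.Ioi 0 →
          (∀ x ∈ Set.Ioo a b, ∀ y ∈ E, b - a < |x - y|) →
          ∀ x ∈ Set.Ioo a b, ∀ t : ℝ, 0 < t → t ≤ b - a →
            ENNReal.ofReal (c * (t / (b - a)))
                * Pfwd lam σ (E.indicator 1) ((a + b) / 2) (b - a)
              ≤ Pfwd lam σ (E.indicator 1) x t ∧
            Pfwd lam σ (E.indicator 1) x t
              ≤ ENNReal.ofReal (C * (t / (b - a)))
                * Pfwd lam σ (E.indicator 1) ((a + b) / 2) (b - a) := by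
  refine ⟨((14:ℝ) ^ (lam + 1))⁻¹, (14:ℝ) ^ (lam + 1), ?_, ?_, ?_⟩
  · positivity
  · have h1 : (1:ℝ) ≤ (14:ℝ) ^ (lam + 1) :=
      Real.one_le_rpow (by norm_num) (by linarith)
    calc ((14:ℝ) ^ (lam + 1))⁻¹ ≤ 1 := inv_le_one_of_one_le₀ h1
      _ ≤ (14:ℝ) ^ (lam + 1) := h1
  intro σ a b ha hab E hEmeas hEsub hsep x hx t ht htL
  have hL : 0 < b - a := by linarith
  have hmmem : (a + b) / 2 ∈ Set.Ioo a b := ⟨by linarith, by linarith⟩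
  have hcnn : 0 ≤ ((14:ℝ) ^ (lam + 1))⁻¹ * (t / (b - a)) := by positivity
  have hCnn : 0 ≤ (14:ℝ) ^ (lam + 1) * (t / (b - a)) := by positivity
  have hkey : ∀ y ∈ E,
      ((14:ℝ) ^ (lam + 1))⁻¹ * (t / (b - a)) * PK lam (b - a) ((a + b) / 2) y
        ≤ PK lam t x y ∧
      PK lam t x y ≤ (14:ℝ) ^ (lam + 1) * (t / (b - a)) * PK lam (b - a) ((a + b) / 2) y :=
    fun y hyE => PK_compare hlam ha hab hx (hEsub hyE) (hsep x hx y hyE)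
      (hsep _ hmmem y hyE) ht htL
  constructor
  · calc ENNReal.ofReal (((14:ℝ) ^ (lam + 1))⁻¹ * (t / (b - a)))
          * Pfwd lam σ (E.indicator 1) ((a + b) / 2) (b - a)
        = ∫⁻ y in Set.Ioi (0:ℝ), ENNReal.ofReal (((14:ℝ) ^ (lam + 1))⁻¹ * (t / (b - a)))
            * (ENNReal.ofReal (PK lam (b - a) ((a + b) / 2) y) * E.indicator 1 y) ∂σ :=
          (lintegral_const_mul' _ _ ENNReal.ofReal_ne_top).symm
      _ ≤ ∫⁻ y in Set.Ioi (0:ℝ),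
            ENNReal.ofReal (PK lam t x y) * E.indicator 1 y ∂σ := by
          refine setLIntegral_mono' measurableSet_Ioi fun y hy => ?_
          by_cases hyE : y ∈ E
          · simp only [Set.indicator_of_mem hyE, Pi.one_apply, mul_one]
            rw [← ENNReal.ofReal_mul hcnn]
            exact ENNReal.ofReal_le_ofReal (hkey y hyE).1
          · simp [Set.indicator_of_notMem hyE]
      _ = Pfwd lam σ (E.indicator 1) x t := rfl
  · calc Pfwd lam σ (E.indicator 1) x t
        ≤ ∫⁻ y in Set.Ioi (0:ℝ), ENNReal.ofReal ((14:ℝ) ^ (lam + 1) * (t / (b - a)))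
            * (ENNReal.ofReal (PK lam (b - a) ((a + b) / 2) y) * E.indicator 1 y) ∂σ := by
          refine setLIntegral_mono' measurableSet_Ioi fun y hy => ?_
          by_cases hyE : y ∈ E
          · simp only [Set.indicator_of_mem hyE, Pi.one_apply, mul_one]
            rw [← ENNReal.ofReal_mul hCnn]
            exact ENNReal.ofReal_le_ofReal (hkey y hyE).2
          · simp [Set.indicator_of_notMem hyE]
      _ = ENNReal.ofReal ((14:ℝ) ^ (lam + 1) * (t / (b - a)))
            * Pfwd lam σ (E.indicator 1) ((a + b) / 2) (b - a) :=
          lintegral_const_mul' _ _ ENNReal.ofReal_ne_top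
end
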